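/- arXiv:1710.02744 — 2 statements merged into one kernel-verified Lean document; each statement's English description precedes it below -/
import Mathlib

section
/- In the counting model for sampling without replacement, both K_j = (np − Q(j))/(n − j) and K̃_j = (jp − Q(j))/(n − j), defined for 0 ≤ j ≤ n−1, are martingales with respect to the filtration (F_j)_{0≤j≤n−1}. -/
open MeasureTheory Finset
open scoped ENNReal

/-- The σ-algebra generated by the first `j` draws `C_1, …, C_j`, where
`C_k = d (π k)` for a permutation `π`. -/
noncomputable def sigmaUpTo {n : ℕ} (d : Fin n → ℕ) (j : ℕ) :
    MeasurableSpace (Equiv.Perm (Fin n)) :=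
  ⨆ k : Fin n, ⨆ _ : (k : ℕ) < j,
    MeasurableSpace.comap (fun π : Equiv.Perm (Fin n) => d (π k)) ⊤

namespace Stmt8Aux

variable {n : ℕ} (d : Fin n → ℕ) (i j : ℕ)

/-- The vector of the first `j` draw values (0 elsewhere). -/
def Fv (d : Fin n → ℕ) (j : ℕ) (π : Equiv.Perm (Fin n)) : Fin n → ℕ :=
  fun k => if (k : ℕ) < j then d (π k) else 0

lemma measurableSet_preimage_Fv (t : Set (Fin n → ℕ)) :
    MeasurableSet[sigmaUpTo d j] (Fv d j ⁻¹' t) := by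
  have h1 : Fv d j ⁻¹' t = ⋃ (π₀ : Equiv.Perm (Fin n)) (_ : Fv d j π₀ ∈ t),
      {π | Fv d j π = Fv d j π₀} := by
    ext π
    simp only [Set.mem_preimage, Set.mem_iUnion, Set.mem_setOf_eq]
    exact ⟨fun h => ⟨π, h, rfl⟩, fun ⟨π₀, h, he⟩ => he ▸ h⟩
  rw [h1]
  refine MeasurableSet.iUnion fun π₀ => MeasurableSet.iUnion fun _ => ?_
  have h2 : {π | Fv d j π = Fv d j π₀} =
      ⋂ (k : Fin n) (_ : (k : ℕ) < j), {π | d (π k) = Fv d j π₀ k} := by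
    ext π
    simp only [Set.mem_setOf_eq, Set.mem_iInter]
    constructor
    · intro h k hk
      have := congrFun h k
      simpa [Fv, hk] using this
    · intro h; funext k
      by_cases hk : (k : ℕ) < j
      · simpa [Fv, hk] using h k hk
      · simp [Fv, hk]
  rw [h2]
  refine MeasurableSet.iInter fun k => MeasurableSet.iInter fun hk => ?_
  have hmeas : MeasurableSet[MeasurableSpace.comap
      (fun π : Equiv.Perm (Fin n) => d (π k)) ⊤] {π | d (π k) = Fv d j π₀ k} := by
    refine ⟨{Fv d j π₀ k}, trivial, ?_⟩
    ext π; simp [eq_comm]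
  exact (le_iSup₂ (f := fun (k : Fin n) (_ : (k : ℕ) < j) =>
    MeasurableSpace.comap (fun π : Equiv.Perm (Fin n) => d (π k)) ⊤) k hk) _ hmeas

lemma sigmaUpTo_le_comap :
    sigmaUpTo d j ≤ MeasurableSpace.comap (Fv d j) ⊤ := by
  refine iSup_le fun k => iSup_le fun hk => ?_
  have he : (fun π : Equiv.Perm (Fin n) => d (π k)) = (fun g : Fin n → ℕ => g k) ∘ Fv d j := by
    funext π; simp [Fv, hk]
  rw [he, ← MeasurableSpace.comap_comp]
  exact MeasurableSpace.comap_mono le_top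

lemma mem_iff_of_fv_eq {s : Set (Equiv.Perm (Fin n))}
    (hs : MeasurableSet[sigmaUpTo d j] s) {π π' : Equiv.Perm (Fin n)}
    (h : Fv d j π = Fv d j π') : π ∈ s ↔ π' ∈ s := by
  obtain ⟨t, -, rfl⟩ := MeasurableSpace.measurableSet_comap.mp (sigmaUpTo_le_comap d j s hs)
  simp only [Set.mem_preimage, h]

lemma stronglyMeasurable_comp (g : (Fin n → ℕ) → ℝ) :
    StronglyMeasurable[sigmaUpTo d j] (fun π => g (Fv d j π)) := by
  refine Measurable.stronglyMeasurable ?_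
  intro B _
  exact measurableSet_preimage_Fv d j (g ⁻¹' B)




def Qd (d : Fin n → ℕ) (i s : ℕ) (π : Equiv.Perm (Fin n)) : ℕ :=
  (Finset.univ.filter (fun k : Fin n => (k : ℕ) < s ∧ d (π k) = i)).card

def Xd (d : Fin n → ℕ) (i : ℕ) (m : Fin n) (π : Equiv.Perm (Fin n)) : ℕ :=
  if d (π m) = i then 1 else 0

lemma sum_Xd (π : Equiv.Perm (Fin n)) :
    ∑ m : Fin n, Xd d i m π = (Finset.univ.filter (fun l : Fin n => d l = i)).card := by
  classical
  have h1 : ∑ m : Fin n, Xd d i m π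
      = (Finset.univ.filter (fun m : Fin n => d (π m) = i)).card := by
    rw [Finset.card_filter]
    rfl
  rw [h1]
  refine Finset.card_bij (fun m _ => π m) ?_ ?_ ?_
  · intro m hm; simp only [mem_filter, mem_univ, true_and] at hm ⊢; exact hm
  · intro a _ b _ hab; exact π.injective hab
  · intro l hl
    refine ⟨π⁻¹ l, ?_, by simp⟩
    simp only [mem_filter, mem_univ, true_and] at hl ⊢
    simpa using hl

lemma Qd_eq_sum (π : Equiv.Perm (Fin n)) :
    Qd d i j π = ∑ k ∈ Finset.univ.filter (fun k : Fin n => (k : ℕ) < j), Xd d i k π := by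
  classical
  rw [Qd, Finset.card_filter, Finset.sum_filter]
  refine Finset.sum_congr rfl fun k _ => ?_
  by_cases hk : (k : ℕ) < j <;> simp [Xd, hk]

lemma Qd_split (π : Equiv.Perm (Fin n)) :
    Qd d i j π + ∑ m ∈ Finset.univ.filter (fun m : Fin n => ¬ (m : ℕ) < j), Xd d i m π
      = (Finset.univ.filter (fun l : Fin n => d l = i)).card := by
  classical
  rw [Qd_eq_sum, Finset.sum_filter_add_sum_filter_not, sum_Xd]

lemma Qd_succ (π : Equiv.Perm (Fin n)) (jI : Fin n) (hjI : (jI : ℕ) = j) :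
    Qd d i (j + 1) π = Qd d i j π + Xd d i jI π := by
  classical
  rw [Qd_eq_sum, Qd_eq_sum]
  have hsplit : Finset.univ.filter (fun k : Fin n => (k : ℕ) < j + 1)
      = insert jI (Finset.univ.filter (fun k : Fin n => (k : ℕ) < j)) := by
    ext k
    simp only [mem_filter, mem_univ, true_and, mem_insert]
    constructor
    · intro hk
      rcases Nat.lt_succ_iff_lt_or_eq.mp hk with h | h
      · exact Or.inr h
      · exact Or.inl (Fin.ext (by omega))
    · rintro (rfl | h)
      · omega
      · omega
  rw [hsplit, Finset.sum_insert (by simp [hjI]), Nat.add_comm]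

lemma Fv_mul_swap (π : Equiv.Perm (Fin n)) (a b : Fin n)
    (ha : j ≤ (a : ℕ)) (hb : j ≤ (b : ℕ)) :
    Fv d j (π * Equiv.swap a b) = Fv d j π := by
  funext k
  by_cases hk : (k : ℕ) < j
  · have hka : k ≠ a := by intro h; subst h; omega
    have hkb : k ≠ b := by intro h; subst h; omega
    simp [Fv, hk, Equiv.Perm.mul_apply, Equiv.swap_apply_of_ne_of_ne hka hkb]
  · simp [Fv, hk]

lemma sum_Xd_fiber_eq (v : Fin n → ℕ) (a b : Fin n)
    (ha : j ≤ (a : ℕ)) (hb : j ≤ (b : ℕ)) :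
    ∑ π ∈ Finset.univ.filter (fun π => Fv d j π = v), Xd d i a π
      = ∑ π ∈ Finset.univ.filter (fun π => Fv d j π = v), Xd d i b π := by
  classical
  refine Finset.sum_nbij' (fun π => π * Equiv.swap a b) (fun π => π * Equiv.swap a b)
    ?_ ?_ ?_ ?_ ?_
  · intro π hπ
    simp only [mem_filter, mem_univ, true_and] at hπ ⊢
    rw [Fv_mul_swap d j π a b ha hb]; exact hπ
  · intro π hπ
    simp only [mem_filter, mem_univ, true_and] at hπ ⊢
    rw [Fv_mul_swap d j π a b ha hb]; exact hπ
  · intro π _; show π * Equiv.swap a b * Equiv.swap a b = π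
    rw [mul_assoc, Equiv.swap_mul_self, mul_one]
  · intro π _; show π * Equiv.swap a b * Equiv.swap a b = π
    rw [mul_assoc, Equiv.swap_mul_self, mul_one]
  · intro π _
    simp only [Xd, Equiv.Perm.mul_apply, Equiv.swap_apply_right]

lemma card_filter_not_lt (hjn : j ≤ n) :
    (Finset.univ.filter (fun m : Fin n => ¬ (m : ℕ) < j)).card = n - j := by
  classical
  have h1 : (Finset.univ.filter (fun m : Fin n => (m : ℕ) < j)).card = j := by
    rw [← Fintype.card_fin j, ← Finset.card_univ]
    refine Finset.card_bij (fun m hm => (⟨(m : ℕ), by simpa using hm⟩ : Fin j)) ?_ ?_ ?_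
    · intros; exact Finset.mem_univ _
    · intro a ha b hb hab
      simpa [Fin.ext_iff] using hab
    · intro k _
      exact ⟨⟨(k : ℕ), by omega⟩, by simp [k.2], rfl⟩
  have h2 := Finset.card_filter_add_card_filter_not
    (s := (Finset.univ : Finset (Fin n))) (p := fun m : Fin n => (m : ℕ) < j)
  rw [Finset.card_univ, Fintype.card_fin] at h2
  omega

lemma Qd_const_on_fiber (v : Fin n → ℕ) (π : Equiv.Perm (Fin n)) (h : Fv d j π = v) :
    Qd d i j π = (Finset.univ.filter (fun k : Fin n => (k : ℕ) < j ∧ v k = i)).card := by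
  classical
  unfold Qd
  congr 1
  apply Finset.filter_congr
  intro k _
  by_cases hk : (k : ℕ) < j
  · have : d (π k) = v k := by rw [← h]; simp [Fv, hk]
    simp [hk, this]
  · simp [hk]

lemma Qd_eq_Fv (π : Equiv.Perm (Fin n)) :
    Qd d i j π
      = (Finset.univ.filter (fun k : Fin n => (k : ℕ) < j ∧ Fv d j π k = i)).card := by
  unfold Qd
  congr 1
  apply Finset.filter_congr
  intro k _
  by_cases hk : (k : ℕ) < j
  · simp [Fv, hk]
  · simp [hk]

/-- The key counting identity on a fiber. -/
lemma key_count (hjn : j ≤ n) (v : Fin n → ℕ) (jI : Fin n) (hjI : j ≤ (jI : ℕ)) :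
    (∑ π ∈ Finset.univ.filter (fun π => Fv d j π = v), Qd d i j π)
      + (n - j) * ∑ π ∈ Finset.univ.filter (fun π => Fv d j π = v), Xd d i jI π
    = (Finset.univ.filter (fun l : Fin n => d l = i)).card
        * (Finset.univ.filter (fun π => Fv d j π = v)).card := by
  classical
  set S := Finset.univ.filter (fun π : Equiv.Perm (Fin n) => Fv d j π = v) with hS
  have h1 : ∀ π ∈ S, Qd d i j π
      + ∑ m ∈ Finset.univ.filter (fun m : Fin n => ¬ (m : ℕ) < j), Xd d i m π
      = (Finset.univ.filter (fun l : Fin n => d l = i)).card :=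
    fun π _ => Qd_split d i j π
  have h2 : ∑ π ∈ S, (Qd d i j π
      + ∑ m ∈ Finset.univ.filter (fun m : Fin n => ¬ (m : ℕ) < j), Xd d i m π)
      = (Finset.univ.filter (fun l : Fin n => d l = i)).card * S.card := by
    rw [Finset.sum_congr rfl h1, Finset.sum_const, smul_eq_mul, Nat.mul_comm]
  rw [Finset.sum_add_distrib] at h2
  have h3 : ∑ π ∈ S, ∑ m ∈ Finset.univ.filter (fun m : Fin n => ¬ (m : ℕ) < j), Xd d i m π
      = (n - j) * ∑ π ∈ S, Xd d i jI π := by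
    rw [Finset.sum_comm]
    have : ∀ m ∈ Finset.univ.filter (fun m : Fin n => ¬ (m : ℕ) < j),
        ∑ π ∈ S, Xd d i m π = ∑ π ∈ S, Xd d i jI π := by
      intro m hm
      simp only [mem_filter, mem_univ, true_and, not_lt] at hm
      exact sum_Xd_fiber_eq d i j v m jI hm hjI
    rw [Finset.sum_congr rfl this, Finset.sum_const, smul_eq_mul, card_filter_not_lt j hjn]
  rw [h3] at h2
  exact h2

lemma fiber_sums (hn2 : j + 2 ≤ n) (p : ℝ)
    (hpM : (n : ℝ) * p = ((Finset.univ.filter (fun l : Fin n => d l = i)).card : ℝ))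
    (v : Fin n → ℕ) :
    (∑ π ∈ Finset.univ.filter (fun π => Fv d j π = v),
        ((n : ℝ) * p - (Qd d i (j + 1) π : ℝ)) / ((n : ℝ) - ((j + 1 : ℕ) : ℝ))
      = ∑ π ∈ Finset.univ.filter (fun π => Fv d j π = v),
        ((n : ℝ) * p - (Qd d i j π : ℝ)) / ((n : ℝ) - (j : ℝ)))
    ∧ (∑ π ∈ Finset.univ.filter (fun π => Fv d j π = v),
        (((j + 1 : ℕ) : ℝ) * p - (Qd d i (j + 1) π : ℝ)) / ((n : ℝ) - ((j + 1 : ℕ) : ℝ))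
      = ∑ π ∈ Finset.univ.filter (fun π => Fv d j π = v),
        ((j : ℝ) * p - (Qd d i j π : ℝ)) / ((n : ℝ) - (j : ℝ))) := by
  classical
  have hjn : j ≤ n := by omega
  have hjlt : j < n := by omega
  set S := Finset.univ.filter (fun π : Equiv.Perm (Fin n) => Fv d j π = v) with hSdef
  set jI : Fin n := ⟨j, hjlt⟩ with hjIdef
  set q : ℕ := (Finset.univ.filter (fun k : Fin n => (k : ℕ) < j ∧ v k = i)).card with hqdef
  set M : ℕ := (Finset.univ.filter (fun l : Fin n => d l = i)).card with hMdef
  set c : ℕ := S.card with hcdef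
  set s : ℕ := ∑ π ∈ S, Xd d i jI π with hsdef
  have hQc : ∀ π ∈ S, Qd d i j π = q := by
    intro π hπ
    rw [hSdef, Finset.mem_filter] at hπ
    exact Qd_const_on_fiber d i j v π hπ.2
  have hkey : q * c + (n - j) * s = M * c := by
    have h0 := key_count d i j hjn v jI (by simp [hjIdef])
    rw [Finset.sum_congr rfl hQc, Finset.sum_const, smul_eq_mul] at h0
    rw [← hsdef, ← hMdef, ← hcdef] at h0
    rw [Nat.mul_comm c q] at h0
    exact h0
  have hkeyR : (q : ℝ) * c + ((n : ℝ) - j) * s = (M : ℝ) * c := by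
    have := congrArg (Nat.cast : ℕ → ℝ) hkey
    push_cast [Nat.cast_sub hjn] at this
    exact this
  have hQsucc : ∀ π ∈ S, (Qd d i (j + 1) π : ℝ) = (q : ℝ) + (Xd d i jI π : ℝ) := by
    intro π hπ
    rw [Qd_succ d i j π jI (by simp [hjIdef]), hQc π hπ]
    push_cast; ring
  have hsum1 : ∑ π ∈ S, (Qd d i (j + 1) π : ℝ) = (q : ℝ) * c + s := by
    rw [Finset.sum_congr rfl hQsucc, Finset.sum_add_distrib, Finset.sum_const, hsdef]
    push_cast
    ring
  have hsum0 : ∑ π ∈ S, (Qd d i j π : ℝ) = (q : ℝ) * c := by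
    have : ∀ π ∈ S, (Qd d i j π : ℝ) = (q : ℝ) := fun π hπ => by rw [hQc π hπ]
    rw [Finset.sum_congr rfl this, Finset.sum_const]
    push_cast; ring
  have ha0 : (n : ℝ) - (j : ℝ) ≠ 0 := by
    have : (j : ℝ) + 2 ≤ (n : ℝ) := by exact_mod_cast hn2
    linarith
  have ha1 : (n : ℝ) - ((j + 1 : ℕ) : ℝ) ≠ 0 := by
    have : (j : ℝ) + 2 ≤ (n : ℝ) := by exact_mod_cast hn2
    push_cast
    linarith
  constructor
  · rw [← Finset.sum_div, ← Finset.sum_div, Finset.sum_sub_distrib, Finset.sum_sub_distrib,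
      hsum1, hsum0, Finset.sum_const, div_eq_div_iff ha1 ha0]
    push_cast
    linear_combination (-1 : ℝ) * hkeyR + (c : ℝ) * hpM
  · rw [← Finset.sum_div, ← Finset.sum_div, Finset.sum_sub_distrib, Finset.sum_sub_distrib,
      hsum1, hsum0, Finset.sum_const, Finset.sum_const, div_eq_div_iff ha1 ha0]
    push_cast
    linear_combination (-1 : ℝ) * hkeyR + (c : ℝ) * hpM


lemma sum_fiberwise_eq {n : ℕ} (d : Fin n → ℕ) (j : ℕ)
    (f g : Equiv.Perm (Fin n) → ℝ) (A : Finset (Equiv.Perm (Fin n)))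
    (hA : ∀ π π', Fv d j π = Fv d j π' → (π ∈ A ↔ π' ∈ A))
    (h : ∀ v, ∑ π ∈ Finset.univ.filter (fun π => Fv d j π = v), f π
        = ∑ π ∈ Finset.univ.filter (fun π => Fv d j π = v), g π) :
    ∑ π ∈ A, f π = ∑ π ∈ A, g π := by
  classical
  set T := A.image (Fv d j) with hT
  have hmem : ∀ π, π ∈ A ↔ Fv d j π ∈ T := by
    intro π
    constructor
    · intro h'; exact Finset.mem_image_of_mem _ h'
    · intro h'
      obtain ⟨π', hπ', he⟩ := Finset.mem_image.mp h'
      exact (hA π' π he).mp hπ'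
  have hAeq : A = Finset.univ.filter (fun π => Fv d j π ∈ T) := by
    ext π; simp [hmem π]
  have key : ∀ F : Equiv.Perm (Fin n) → ℝ, ∑ π ∈ A, F π
      = ∑ v ∈ T, ∑ π ∈ Finset.univ.filter (fun π => Fv d j π = v), F π := by
    intro F
    rw [hAeq, ← Finset.sum_fiberwise_of_maps_to (g := Fv d j) (t := T)
      (fun π hπ => (Finset.mem_filter.mp hπ).2)]
    refine Finset.sum_congr rfl fun v hv => ?_
    refine Finset.sum_congr ?_ fun _ _ => rfl
    ext π
    simp only [Finset.mem_filter, Finset.mem_univ, true_and]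
    constructor
    · rintro ⟨-, h2⟩; exact h2
    · intro h2; exact ⟨h2 ▸ hv, h2⟩
  rw [key f, key g]
  exact Finset.sum_congr rfl fun v _ => h v

lemma setIntegral_smul_count {α : Type*} [Fintype α] [m : MeasurableSpace α] (hm : m = ⊤)
    (f : α → ℝ) (s : Set α) [DecidablePred (· ∈ s)] (c : ℝ≥0∞) (hc : c ≠ ⊤) :
    ∫ x in s, f x ∂(c • Measure.count) = c.toReal * ∑ x ∈ Finset.univ.filter (· ∈ s), f x := by
  classical
  haveI : MeasurableSingletonClass α :=
    ⟨fun a => by rw [hm]; exact MeasurableSpace.measurableSet_top⟩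
  haveI : IsFiniteMeasure ((c • Measure.count : Measure α)) := by
    constructor
    rw [Measure.smul_apply, smul_eq_mul, Measure.count_univ]
    exact ENNReal.mul_lt_top hc.lt_top (by simp)
  rw [← MeasureTheory.integral_indicator (by rw [hm]; exact MeasurableSpace.measurableSet_top)]
  rw [MeasureTheory.integral_fintype (Integrable.of_finite)]
  have hsingle : ∀ x : α, ((c • Measure.count : Measure α) {x}).toReal = c.toReal := by
    intro x
    rw [Measure.smul_apply, smul_eq_mul, Measure.count_singleton, mul_one]
  calc ∑ x, ((c • Measure.count : Measure α) {x}).toReal • s.indicator f x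
      = ∑ x, c.toReal * s.indicator f x := by
        refine Finset.sum_congr rfl fun x _ => ?_
        rw [hsingle x, smul_eq_mul]
    _ = c.toReal * ∑ x, s.indicator f x := by rw [Finset.mul_sum]
    _ = c.toReal * ∑ x ∈ Finset.univ.filter (· ∈ s), f x := by
        congr 1
        rw [Finset.sum_filter]
        exact Finset.sum_congr rfl fun x _ => Set.indicator_apply s f x

end Stmt8Aux

open Stmt8Aux in
/-- Counting model for sampling without replacement: both
`K_j = (n p - Q(j))/(n - j)` and `K̃_j = (j p - Q(j))/(n - j)`, `0 ≤ j ≤ n - 1`,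
are martingales with respect to the filtration `(F_j)_{0 ≤ j ≤ n-1}`: each is
adapted, integrable, and satisfies `E[K_{j+1} | F_j] = K_j` a.s. for `j ≤ n - 2`. -/
theorem stmt8 {n : ℕ} (hn : 1 ≤ n) (d : Fin n → ℕ) (i : ℕ)
    [m0 : MeasurableSpace (Equiv.Perm (Fin n))] (hm0 : m0 = ⊤)
    (μ : Measure (Equiv.Perm (Fin n)))
    (hμ : μ = ((Nat.factorial n : ℝ≥0∞))⁻¹ • Measure.count)
    (p : ℝ) (hp : p = ((Finset.univ.filter (fun j : Fin n => d j = i)).card : ℝ) / n)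
    (Q : ℕ → Equiv.Perm (Fin n) → ℕ)
    (hQ : ∀ s π, Q s π =
      (Finset.univ.filter (fun k : Fin n => (k : ℕ) < s ∧ d (π k) = i)).card)
    (K Kt : ℕ → Equiv.Perm (Fin n) → ℝ)
    (hK : ∀ j π, K j π = ((n : ℝ) * p - (Q j π : ℝ)) / ((n : ℝ) - j))
    (hKt : ∀ j π, Kt j π = ((j : ℝ) * p - (Q j π : ℝ)) / ((n : ℝ) - j)) :
    (∀ j, j + 1 ≤ n → StronglyMeasurable[sigmaUpTo d j] (K j)
        ∧ StronglyMeasurable[sigmaUpTo d j] (Kt j)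
        ∧ Integrable (K j) μ ∧ Integrable (Kt j) μ)
      ∧ (∀ j, j + 2 ≤ n → μ[K (j + 1) | sigmaUpTo d j] =ᵐ[μ] K j)
      ∧ (∀ j, j + 2 ≤ n → μ[Kt (j + 1) | sigmaUpTo d j] =ᵐ[μ] Kt j) := by
  classical
  haveI : MeasurableSingletonClass (Equiv.Perm (Fin n)) :=
    ⟨fun a => by rw [hm0]; exact MeasurableSpace.measurableSet_top⟩
  have hc : ((Nat.factorial n : ℝ≥0∞))⁻¹ ≠ ⊤ := by
    simp [Nat.factorial_ne_zero]
  haveI hfin : IsFiniteMeasure μ := by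
    rw [hμ]
    constructor
    rw [Measure.smul_apply, smul_eq_mul, Measure.count_univ]
    exact ENNReal.mul_lt_top hc.lt_top (by simp)
  -- K and Kt rewritten through Qd
  have hKQ : ∀ j π, K j π = ((n : ℝ) * p - (Qd d i j π : ℝ)) / ((n : ℝ) - j) := by
    intro j π; rw [hK, hQ]; rfl
  have hKtQ : ∀ j π, Kt j π = ((j : ℝ) * p - (Qd d i j π : ℝ)) / ((n : ℝ) - j) := by
    intro j π; rw [hKt, hQ]; rfl
  -- measurability
  have hmeasK : ∀ j, StronglyMeasurable[sigmaUpTo d j] (K j) := by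
    intro j
    have heq : K j = fun π => (fun w : Fin n → ℕ =>
        ((n : ℝ) * p - ((Finset.univ.filter
            (fun k : Fin n => (k : ℕ) < j ∧ w k = i)).card : ℝ)) / ((n : ℝ) - j))
        (Fv d j π) := by
      funext π
      simp only [hKQ, Qd_eq_Fv d i j]
    rw [heq]
    exact stronglyMeasurable_comp d j (fun w : Fin n → ℕ =>
        ((n : ℝ) * p - ((Finset.univ.filter
            (fun k : Fin n => (k : ℕ) < j ∧ w k = i)).card : ℝ)) / ((n : ℝ) - j))
  have hmeasKt : ∀ j, StronglyMeasurable[sigmaUpTo d j] (Kt j) := by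
    intro j
    have heq : Kt j = fun π => (fun w : Fin n → ℕ =>
        ((j : ℝ) * p - ((Finset.univ.filter
            (fun k : Fin n => (k : ℕ) < j ∧ w k = i)).card : ℝ)) / ((n : ℝ) - j))
        (Fv d j π) := by
      funext π
      simp only [hKtQ, Qd_eq_Fv d i j]
    rw [heq]
    exact stronglyMeasurable_comp d j (fun w : Fin n → ℕ =>
        ((j : ℝ) * p - ((Finset.univ.filter
            (fun k : Fin n => (k : ℕ) < j ∧ w k = i)).card : ℝ)) / ((n : ℝ) - j))
  have hpM : (n : ℝ) * p = ((Finset.univ.filter (fun l : Fin n => d l = i)).card : ℝ) := by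
    rw [hp]
    have hn0 : (n : ℝ) ≠ 0 := by positivity
    field_simp
  -- conditional expectation argument, for both K and Kt simultaneously
  have hcond : ∀ (G : ℕ → Equiv.Perm (Fin n) → ℝ) (j : ℕ), j + 2 ≤ n →
      (∀ j', StronglyMeasurable[sigmaUpTo d j'] (G j')) →
      (∀ v : Fin n → ℕ,
        ∑ π ∈ Finset.univ.filter (fun π => Fv d j π = v), G (j + 1) π
          = ∑ π ∈ Finset.univ.filter (fun π => Fv d j π = v), G j π) →
      μ[G (j + 1) | sigmaUpTo d j] =ᵐ[μ] G j := by
    intro G j hj hGmeas hGsum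
    have hmle : sigmaUpTo d j ≤ m0 := by rw [hm0]; exact le_top
    haveI : SigmaFinite (μ.trim hmle) := by
      haveI := MeasureTheory.isFiniteMeasure_trim hmle (μ := μ)
      infer_instance
    refine (ae_eq_condExp_of_forall_setIntegral_eq hmle (Integrable.of_finite)
      (fun s _ _ => Integrable.integrableOn (Integrable.of_finite))
      (fun s hs _ => ?_)
      (StronglyMeasurable.aestronglyMeasurable (hGmeas j))).symm
    rw [hμ, setIntegral_smul_count hm0 _ _ _ hc, setIntegral_smul_count hm0 _ _ _ hc]
    congr 1
    refine sum_fiberwise_eq d j _ _ _ ?_ (fun v => (hGsum v).symm)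
    intro π π' he
    simp only [Finset.mem_filter, Finset.mem_univ, true_and]
    exact mem_iff_of_fv_eq d j hs he
  refine ⟨fun j hj => ⟨hmeasK j, hmeasKt j, Integrable.of_finite, Integrable.of_finite⟩,
    fun j hj => ?_, fun j hj => ?_⟩
  · refine hcond K j hj hmeasK fun v => ?_
    have h1 := (fiber_sums d i j hj p hpM v).1
    calc ∑ π ∈ Finset.univ.filter (fun π => Fv d j π = v), K (j + 1) π
        = ∑ π ∈ Finset.univ.filter (fun π => Fv d j π = v),
            ((n : ℝ) * p - (Qd d i (j + 1) π : ℝ)) / ((n : ℝ) - ((j + 1 : ℕ) : ℝ)) :=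
          Finset.sum_congr rfl fun π _ => by rw [hKQ]
      _ = ∑ π ∈ Finset.univ.filter (fun π => Fv d j π = v),
            ((n : ℝ) * p - (Qd d i j π : ℝ)) / ((n : ℝ) - (j : ℝ)) := h1
      _ = ∑ π ∈ Finset.univ.filter (fun π => Fv d j π = v), K j π :=
          Finset.sum_congr rfl fun π _ => by rw [hKQ]
  · refine hcond Kt j hj hmeasKt fun v => ?_
    have h2 := (fiber_sums d i j hj p hpM v).2
    calc ∑ π ∈ Finset.univ.filter (fun π => Fv d j π = v), Kt (j + 1) π
        = ∑ π ∈ Finset.univ.filter (fun π => Fv d j π = v),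
            (((j + 1 : ℕ) : ℝ) * p - (Qd d i (j + 1) π : ℝ)) / ((n : ℝ) - ((j + 1 : ℕ) : ℝ)) :=
          Finset.sum_congr rfl fun π _ => by rw [hKtQ]
      _ = ∑ π ∈ Finset.univ.filter (fun π => Fv d j π = v),
            ((j : ℝ) * p - (Qd d i j π : ℝ)) / ((n : ℝ) - (j : ℝ)) := h2
      _ = ∑ π ∈ Finset.univ.filter (fun π => Fv d j π = v), Kt j π :=
          Finset.sum_congr rfl fun π _ => by rw [hKtQ]
end

section
/- In the counting model for sampling without replacement, for every 0 ≤ j ≤ n−2 one has, almost surely, var(K̃_{j+1} | F_j) := E[(K̃_{j+1} − K̃_j)² | F_j] ≤ 1/(4(n−(j+1))²), where K̃_j = (jp − Q(j))/(n − j). -/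
open MeasureTheory Finset
open scoped ENNReal

lemma aux_bound (m r : ℝ) (hm : 2 ≤ m) :
    r * (m - r) / (m * (m - 1)) ^ 2 ≤ 1 / (4 * (m - 1) ^ 2) := by
  have h1 : (0:ℝ) < (m - 1) ^ 2 := by nlinarith
  rw [div_le_div_iff₀ (by nlinarith) (by nlinarith)]
  nlinarith [mul_nonneg (sq_nonneg (m - 2 * r)) h1.le]

lemma aux_increment (pp q x m Kr jr : ℝ) (hm1 : m ≠ 0) (hm2 : m - 1 ≠ 0)
    (hK : (jr + m) * pp = Kr) :
    ((jr + 1) * pp - (q + x)) / (m - 1) - (jr * pp - q) / m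
      = ((Kr - q) - m * x) / (m * (m - 1)) := by
  field_simp
  ring_nf
  linear_combination hK

/-- Counting model for sampling without replacement: for `0 ≤ j ≤ n - 2`, a.s.
`var(K̃_{j+1} | F_j) = E[(K̃_{j+1} - K̃_j)² | F_j] ≤ 1/(4 (n - (j+1))²)`, where
`K̃_j = (j p - Q(j))/(n - j)`. -/
theorem stmt13 {n : ℕ} (hn : 1 ≤ n) (d : Fin n → ℕ) (i : ℕ)
    [m0 : MeasurableSpace (Equiv.Perm (Fin n))] (hm0 : m0 = ⊤)
    (μ : Measure (Equiv.Perm (Fin n)))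
    (hμ : μ = ((Nat.factorial n : ℝ≥0∞))⁻¹ • Measure.count)
    (p : ℝ) (hp : p = ((Finset.univ.filter (fun j : Fin n => d j = i)).card : ℝ) / n)
    (Q : ℕ → Equiv.Perm (Fin n) → ℕ)
    (hQ : ∀ s π, Q s π =
      (Finset.univ.filter (fun k : Fin n => (k : ℕ) < s ∧ d (π k) = i)).card)
    (Kt : ℕ → Equiv.Perm (Fin n) → ℝ)
    (hKt : ∀ j π, Kt j π = ((j : ℝ) * p - (Q j π : ℝ)) / ((n : ℝ) - j))
    (j : ℕ) (hj : j + 2 ≤ n) :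
    ∀ᵐ π ∂μ,
      (μ[fun π' => (Kt (j + 1) π' - Kt j π') ^ 2 | sigmaUpTo d j]) π
        ≤ 1 / (4 * ((n : ℝ) - (j + 1)) ^ 2) := by
  classical
  haveI hsing : MeasurableSingletonClass (Equiv.Perm (Fin n)) :=
    ⟨fun a => by rw [hm0]; trivial⟩
  have hmeas : ∀ s : Set (Equiv.Perm (Fin n)), MeasurableSet s := fun s => by rw [hm0]; trivial
  haveI hfin : IsFiniteMeasure μ := by
    constructor
    rw [hμ]
    simp only [Measure.smul_apply, smul_eq_mul]
    exact ENNReal.mul_lt_top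
      (ENNReal.inv_ne_top.2 (by exact_mod_cast n.factorial_pos.ne')).lt_top
      (Measure.count_apply_lt_top.2 Set.finite_univ)
  have hm : sigmaUpTo d j ≤ m0 := by rw [hm0]; exact le_top
  haveI : SigmaFinite (μ.trim hm) := inferInstance
  -- basic notation
  have jn : j < n := by omega
  set jF : Fin n := ⟨j, jn⟩ with hjF
  set K : ℕ := (Finset.univ.filter (fun l : Fin n => d l = i)).card with hKdef
  set m' : ℝ := (n : ℝ) - j with hm'
  have hm2 : (2 : ℝ) ≤ m' := by
    have : (j : ℝ) + 2 ≤ n := by exact_mod_cast hj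
    simp only [hm']; linarith
  have hm0' : m' ≠ 0 := by linarith
  have hm1' : m' - 1 ≠ 0 := by linarith
  set X : Equiv.Perm (Fin n) → ℝ := fun π => if d (π jF) = i then 1 else 0 with hX
  set Rr : Equiv.Perm (Fin n) → ℝ := fun π => (K : ℝ) - (Q j π : ℝ) with hRr
  set g : Equiv.Perm (Fin n) → ℝ :=
    fun π => Rr π * (m' - Rr π) / (m' * (m' - 1)) ^ 2 with hg
  set f : Equiv.Perm (Fin n) → ℝ := fun π' => (Kt (j + 1) π' - Kt j π') ^ 2 with hf
  have hnp : (n : ℝ) * p = K := by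
    rw [hp]; field_simp
  -- Q at j+1
  have hQj1 : ∀ π : Equiv.Perm (Fin n), (Q (j+1) π : ℝ) = (Q j π : ℝ) + X π := by
    intro π
    have hsplit : (Finset.univ.filter (fun k : Fin n => (k : ℕ) < j + 1 ∧ d (π k) = i))
        = (Finset.univ.filter (fun k : Fin n => (k : ℕ) < j ∧ d (π k) = i))
          ∪ (Finset.univ.filter (fun k : Fin n => (k : ℕ) = j ∧ d (π k) = i)) := by
      ext k
      simp only [Finset.mem_filter, Finset.mem_union, Finset.mem_univ, true_and]
      constructor
      · rintro ⟨hk, hd⟩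
        rcases Nat.lt_succ_iff_lt_or_eq.1 hk with h | h
        · exact Or.inl ⟨h, hd⟩
        · exact Or.inr ⟨h, hd⟩
      · rintro (⟨hk, hd⟩ | ⟨hk, hd⟩)
        · exact ⟨by omega, hd⟩
        · exact ⟨by omega, hd⟩
    have hdisj : Disjoint
        (Finset.univ.filter (fun k : Fin n => (k : ℕ) < j ∧ d (π k) = i))
        (Finset.univ.filter (fun k : Fin n => (k : ℕ) = j ∧ d (π k) = i)) := by
      rw [Finset.disjoint_filter]
      rintro k _ ⟨hk, -⟩ ⟨hk', -⟩
      omega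
    have hsingle : (Finset.univ.filter (fun k : Fin n => (k : ℕ) = j ∧ d (π k) = i)).card
        = if d (π jF) = i then 1 else 0 := by
      split_ifs with h
      · rw [Finset.card_eq_one]
        refine ⟨jF, ?_⟩
        ext k
        simp only [Finset.mem_filter, Finset.mem_univ, true_and, Finset.mem_singleton]
        constructor
        · rintro ⟨hk, -⟩
          exact Fin.ext hk
        · rintro rfl
          exact ⟨rfl, h⟩
      · rw [Finset.card_eq_zero, Finset.filter_eq_empty_iff]
        rintro k - ⟨hk, hd⟩
        exact h (by rwa [show jF = k from (Fin.ext hk.symm)])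
    rw [hQ, hQ, hsplit, Finset.card_union_of_disjoint hdisj, hsingle, hX]
    push_cast
    split_ifs <;> norm_num
  -- increment formula
  have hfform : ∀ π : Equiv.Perm (Fin n),
      f π = (Rr π - m' * X π) ^ 2 / (m' * (m' - 1)) ^ 2 := by
    intro π
    have h1 : Kt (j+1) π - Kt j π = (Rr π - m' * X π) / (m' * (m' - 1)) := by
      rw [hKt, hKt]
      have e1 : (n : ℝ) - (j + 1 : ℕ) = m' - 1 := by push_cast [hm']; ring
      have e2 : (n : ℝ) - (j : ℕ) = m' := by rw [hm']
      have e3 : ((j + 1 : ℕ) : ℝ) = (j : ℝ) + 1 := by push_cast; ring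
      rw [e1, e2, e3, hQj1 π]
      have := aux_increment p ((Q j π : ℝ)) (X π) m' (K : ℝ) (j : ℝ) hm0' hm1'
        (by rw [hm']; rw [show ((j:ℝ) + ((n:ℝ) - j)) = (n:ℝ) by ring]; exact hnp)
      rw [hRr]
      exact this
    simp only [hf]
    rw [h1, div_pow]
  -- invariance of F_j-measurable sets
  have hinv : ∀ s : Set (Equiv.Perm (Fin n)), MeasurableSet[sigmaUpTo d j] s →
      ∀ π π' : Equiv.Perm (Fin n),
      (∀ k : Fin n, (k : ℕ) < j → d (π k) = d (π' k)) → (π ∈ s ↔ π' ∈ s) := by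
    intro s hs π π' hd
    set Φ : Equiv.Perm (Fin n) → (Fin n → ℕ) :=
      fun π k => if (k : ℕ) < j then d (π k) else 0 with hΦ
    have hle : sigmaUpTo d j ≤ MeasurableSpace.comap Φ ⊤ := by
      refine iSup_le fun k => iSup_le fun hk => ?_
      have heq : (fun π : Equiv.Perm (Fin n) => d (π k)) = (fun v : Fin n → ℕ => v k) ∘ Φ := by
        funext π; simp [hΦ, hk]
      rw [heq, ← MeasurableSpace.comap_comp]
      exact MeasurableSpace.comap_mono le_top
    obtain ⟨A, -, rfl⟩ := hle s hs
    have hΦeq : Φ π = Φ π' := by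
      funext k
      simp only [hΦ]
      split_ifs with h
      · exact hd k h
      · rfl
    simp only [Set.mem_preimage, hΦeq]
  -- swap facts
  have hswap_lt : ∀ (k : Fin n), j ≤ (k : ℕ) → ∀ (π : Equiv.Perm (Fin n)) (k' : Fin n),
      (k' : ℕ) < j → (π * Equiv.swap jF k) k' = π k' := by
    intro k hk π k' hk'
    have h1 : k' ≠ jF := by
      intro h
      have : (k' : ℕ) = j := by rw [h]
      omega
    have h2 : k' ≠ k := by
      intro h
      rw [h] at hk'
      omega
    show π (Equiv.swap jF k k') = π k'
    rw [Equiv.swap_apply_of_ne_of_ne h1 h2]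
  have hQswap : ∀ (k : Fin n), j ≤ (k : ℕ) → ∀ π : Equiv.Perm (Fin n),
      Q j (π * Equiv.swap jF k) = Q j π := by
    intro k hk π
    rw [hQ, hQ]
    congr 1
    apply Finset.filter_congr
    intro k' _
    by_cases h : (k' : ℕ) < j
    · simp [h, hswap_lt k hk π k' h]
    · simp [h]
  have hRswap : ∀ (k : Fin n), j ≤ (k : ℕ) → ∀ π : Equiv.Perm (Fin n),
      Rr (π * Equiv.swap jF k) = Rr π := by
    intro k hk π
    rw [hRr]
    simp only
    rw [hQswap k hk π]
  -- K splits as Q(j) plus the count among remaining positions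
  have hKsplit : ∀ π : Equiv.Perm (Fin n), K = Q j π +
      (Finset.univ.filter (fun k : Fin n => ¬ (k : ℕ) < j ∧ d (π k) = i)).card := by
    intro π
    have hKπ : (Finset.univ.filter (fun k : Fin n => d (π k) = i)).card = K := by
      rw [hKdef]
      apply Finset.card_bij (fun k _ => π k)
      · intro k hk
        simp only [Finset.mem_filter, Finset.mem_univ, true_and] at hk ⊢
        exact hk
      · intro a ha b hb hab
        exact π.injective hab
      · intro l hl
        refine ⟨π.symm l, ?_, by simp⟩
        simp only [Finset.mem_filter, Finset.mem_univ, true_and] at hl ⊢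
        simpa using hl
    have := Finset.card_filter_add_card_filter_not
      (s := Finset.univ.filter (fun k : Fin n => d (π k) = i))
      (p := fun k : Fin n => (k : ℕ) < j)
    rw [Finset.filter_filter, Finset.filter_filter, hKπ] at this
    rw [hQ]
    have e1 : (Finset.univ.filter (fun k : Fin n => d (π k) = i ∧ (k : ℕ) < j))
        = (Finset.univ.filter (fun k : Fin n => (k : ℕ) < j ∧ d (π k) = i)) := by
      apply Finset.filter_congr; intro k _; tauto
    have e2 : (Finset.univ.filter (fun k : Fin n => d (π k) = i ∧ ¬ (k : ℕ) < j))
        = (Finset.univ.filter (fun k : Fin n => ¬ (k : ℕ) < j ∧ d (π k) = i)) := by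
      apply Finset.filter_congr; intro k _; tauto
    rw [e1, e2] at this
    omega
  have hfilt_card : (Finset.univ.filter (fun k : Fin n => ¬ (k : ℕ) < j)).card = n - j := by
    have : (Finset.univ.filter (fun k : Fin n => ¬ (k : ℕ) < j)) = Finset.Ici jF := by
      ext k
      simp [Finset.mem_Ici, Fin.le_def, hjF, not_lt]
    rw [this, Fin.card_Ici]
  have hRsum : ∀ π : Equiv.Perm (Fin n), Rr π =
      ∑ k ∈ Finset.univ.filter (fun k : Fin n => ¬ (k : ℕ) < j),
        (if d (π k) = i then (1:ℝ) else 0) := by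
    intro π
    rw [Finset.sum_boole, Finset.filter_filter]
    have h := hKsplit π
    rw [hRr]
    simp only
    rw [h]
    push_cast
    ring
  have hR0 : ∀ π : Equiv.Perm (Fin n), 0 ≤ Rr π := by
    intro π
    rw [hRsum]
    apply Finset.sum_nonneg
    intro k _
    split <;> norm_num
  have hRm : ∀ π : Equiv.Perm (Fin n), Rr π ≤ m' := by
    intro π
    rw [hRsum]
    calc ∑ k ∈ Finset.univ.filter (fun k : Fin n => ¬ (k : ℕ) < j),
          (if d (π k) = i then (1:ℝ) else 0)
        ≤ ∑ _k ∈ Finset.univ.filter (fun k : Fin n => ¬ (k : ℕ) < j), (1:ℝ) := by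
          apply Finset.sum_le_sum; intro k _; split <;> norm_num
      _ = ((n - j : ℕ) : ℝ) := by rw [Finset.sum_const, hfilt_card]; simp
      _ = m' := by rw [hm']; push_cast [Nat.cast_sub jn.le]; ring
  -- set integral as weighted sum
  set c0 : ℝ := ((n.factorial : ℝ))⁻¹ with hc0
  have hμx : ∀ x : Equiv.Perm (Fin n), (μ {x}).toReal = c0 := by
    intro x
    rw [hμ]
    simp [Measure.smul_apply, Measure.count_singleton, hc0, ENNReal.toReal_inv]
  have hint : ∀ (F : Equiv.Perm (Fin n) → ℝ) (s : Set (Equiv.Perm (Fin n))),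
      ∫ π in s, F π ∂μ = c0 * ∑ π : Equiv.Perm (Fin n),
        (if π ∈ s then (1:ℝ) else 0) * F π := by
    intro F s
    rw [← integral_indicator (hmeas s), integral_fintype (Integrable.of_finite),
      Finset.mul_sum]
    refine Finset.sum_congr rfl fun π _ => ?_
    rw [measureReal_def, hμx π, Set.indicator_apply]
    by_cases h : π ∈ s <;> simp [h]
  -- the key exchangeability identity
  have key : ∀ s : Set (Equiv.Perm (Fin n)), MeasurableSet[sigmaUpTo d j] s →
      ∀ ψ : Equiv.Perm (Fin n) → ℝ,
      (∀ (k : Fin n), j ≤ (k : ℕ) → ∀ π : Equiv.Perm (Fin n),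
        ψ (π * Equiv.swap jF k) = ψ π) →
      m' * ∑ π : Equiv.Perm (Fin n), (if π ∈ s then (1:ℝ) else 0) * (ψ π * X π)
        = ∑ π : Equiv.Perm (Fin n), (if π ∈ s then (1:ℝ) else 0) * (ψ π * Rr π) := by
    intro s hs ψ hψ
    have hmm : ∀ (k : Fin n), j ≤ (k : ℕ) → ∀ π : Equiv.Perm (Fin n),
        ((π * Equiv.swap jF k) ∈ s ↔ π ∈ s) := by
      intro k hk π
      refine hinv s hs _ _ fun k' hk' => ?_
      rw [hswap_lt k hk π k' hk']
    have hstep : ∀ (k : Fin n), j ≤ (k : ℕ) →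
        (∑ π : Equiv.Perm (Fin n), (if π ∈ s then (1:ℝ) else 0)
            * (ψ π * (if d (π k) = i then (1:ℝ) else 0)))
          = ∑ π : Equiv.Perm (Fin n), (if π ∈ s then (1:ℝ) else 0) * (ψ π * X π) := by
      intro k hk
      have := Equiv.sum_comp (Equiv.mulRight (Equiv.swap jF k))
        (fun π : Equiv.Perm (Fin n) => (if π ∈ s then (1:ℝ) else 0)
          * (ψ π * (if d (π k) = i then (1:ℝ) else 0)))
      rw [← this]
      refine Finset.sum_congr rfl fun π _ => ?_
      have e0 : (Equiv.mulRight (Equiv.swap jF k)) π = π * Equiv.swap jF k := rfl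
      rw [e0]
      have e1 : (if (π * Equiv.swap jF k) ∈ s then (1:ℝ) else 0)
          = (if π ∈ s then (1:ℝ) else 0) := by
        by_cases h : π ∈ s <;> simp [h, hmm k hk π]
      have e2 : ψ (π * Equiv.swap jF k) = ψ π := hψ k hk π
      have e3 : (π * Equiv.swap jF k) k = π jF := by
        show π (Equiv.swap jF k k) = π jF
        rw [Equiv.swap_apply_right]
      rw [e1, e2, e3, hX]
    calc m' * ∑ π : Equiv.Perm (Fin n), (if π ∈ s then (1:ℝ) else 0) * (ψ π * X π)
        = ∑ k ∈ Finset.univ.filter (fun k : Fin n => ¬ (k : ℕ) < j),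
            ∑ π : Equiv.Perm (Fin n), (if π ∈ s then (1:ℝ) else 0)
              * (ψ π * (if d (π k) = i then (1:ℝ) else 0)) := by
          rw [Finset.sum_congr rfl (fun k hk => hstep k
            (by simpa using (Finset.mem_filter.1 hk).2))]
          rw [Finset.sum_const, hfilt_card, nsmul_eq_mul]
          congr 1
          rw [hm']
          push_cast [Nat.cast_sub jn.le]
          ring
      _ = ∑ π : Equiv.Perm (Fin n), (if π ∈ s then (1:ℝ) else 0) * (ψ π * Rr π) := by
          rw [Finset.sum_comm]
          refine Finset.sum_congr rfl fun π _ => ?_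
          rw [hRsum π, Finset.mul_sum, Finset.mul_sum]
  -- set-integral identity: g integrates like f on F_j-sets
  have hg_eq : ∀ s : Set (Equiv.Perm (Fin n)), MeasurableSet[sigmaUpTo d j] s → μ s < ⊤ →
      ∫ π in s, g π ∂μ = ∫ π in s, f π ∂μ := by
    intro s hs _
    rw [hint g s, hint f s]
    congr 1
    have key1 := key s hs Rr (fun k hk π => hRswap k hk π)
    have key2 := key s hs (fun _ => (1:ℝ)) (fun _ _ _ => rfl)
    set D : ℝ := (m' * (m' - 1)) ^ 2 with hD
    have hDne : D ≠ 0 := by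
      rw [hD]
      positivity
    apply mul_left_cancel₀ hDne
    rw [Finset.mul_sum, Finset.mul_sum]
    have hDgen : ∀ I A : ℝ, D * (I * (A / D)) = I * A := by
      intro I A
      field_simp
    have lhs_eq : ∀ π : Equiv.Perm (Fin n),
        D * ((if π ∈ s then (1:ℝ) else 0) * g π)
          = (if π ∈ s then (1:ℝ) else 0) * (Rr π * (m' - Rr π)) := by
      intro π
      rw [hg]
      simp only
      exact hDgen _ _
    have rhs_eq : ∀ π : Equiv.Perm (Fin n),
        D * ((if π ∈ s then (1:ℝ) else 0) * f π)
          = (if π ∈ s then (1:ℝ) else 0) * (Rr π - m' * X π) ^ 2 := by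
      intro π
      rw [hfform π]
      exact hDgen _ _
    rw [Finset.sum_congr rfl fun π _ => lhs_eq π, Finset.sum_congr rfl fun π _ => rhs_eq π]
    have hX2 : ∀ π : Equiv.Perm (Fin n), X π * X π = X π := by
      intro π
      rw [hX]
      simp only
      split <;> norm_num
    have expand : ∀ π : Equiv.Perm (Fin n),
        (if π ∈ s then (1:ℝ) else 0) * (Rr π - m' * X π) ^ 2
          = (if π ∈ s then (1:ℝ) else 0) * (Rr π * Rr π)
            - 2 * m' * ((if π ∈ s then (1:ℝ) else 0) * (Rr π * X π))
            + m' * (m' * ((if π ∈ s then (1:ℝ) else 0) * ((1:ℝ) * X π))) := by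
      intro π
      by_cases h : π ∈ s
      · simp only [h, if_true]
        linear_combination m' ^ 2 * hX2 π
      · simp only [h, if_false]
        ring
    rw [Finset.sum_congr rfl fun π _ => expand π]
    rw [Finset.sum_add_distrib, Finset.sum_sub_distrib, ← Finset.mul_sum, ← Finset.mul_sum,
      ← Finset.mul_sum]
    have e1 : ∑ π : Equiv.Perm (Fin n), (if π ∈ s then (1:ℝ) else 0) * (Rr π * X π)
        = (∑ π : Equiv.Perm (Fin n), (if π ∈ s then (1:ℝ) else 0) * (Rr π * Rr π)) / m' := by
      rw [eq_div_iff hm0', mul_comm]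
      exact key1
    have e2 : ∑ π : Equiv.Perm (Fin n), (if π ∈ s then (1:ℝ) else 0) * ((1:ℝ) * X π)
        = (∑ π : Equiv.Perm (Fin n), (if π ∈ s then (1:ℝ) else 0) * ((1:ℝ) * Rr π)) / m' := by
      rw [eq_div_iff hm0', mul_comm]
      exact key2
    rw [e1, e2]
    have e3 : ∑ π : Equiv.Perm (Fin n), (if π ∈ s then (1:ℝ) else 0) * (Rr π * (m' - Rr π))
        = m' * (∑ π : Equiv.Perm (Fin n), (if π ∈ s then (1:ℝ) else 0) * ((1:ℝ) * Rr π))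
          - ∑ π : Equiv.Perm (Fin n), (if π ∈ s then (1:ℝ) else 0) * (Rr π * Rr π) := by
      rw [Finset.mul_sum, ← Finset.sum_sub_distrib]
      refine Finset.sum_congr rfl fun π _ => by ring
    rw [e3]
    field_simp
    ring
  -- measurability of g
  have hgm : AEStronglyMeasurable[sigmaUpTo d j] g μ := by
    have hQmeas : Measurable[sigmaUpTo d j] (fun π : Equiv.Perm (Fin n) => Q j π) := by
      have heq : (fun π : Equiv.Perm (Fin n) => Q j π)
          = fun π => ∑ k : Fin n, if (k : ℕ) < j ∧ d (π k) = i then 1 else 0 := by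
        funext π
        rw [hQ, Finset.card_filter]
      rw [heq]
      apply Finset.measurable_sum
      intro k _
      by_cases hk : (k : ℕ) < j
      · have hdm : Measurable[sigmaUpTo d j] (fun π : Equiv.Perm (Fin n) => d (π k)) := by
          rw [measurable_iff_comap_le]
          refine le_trans ?_ (le_iSup_of_le k (le_iSup_of_le hk le_rfl))
          exact le_rfl
        have : (fun π : Equiv.Perm (Fin n) => if (k : ℕ) < j ∧ d (π k) = i then 1 else 0)
            = (fun x : ℕ => if x = i then 1 else 0) ∘ (fun π => d (π k)) := by
          funext π
          simp [hk]
        rw [this]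
        exact Measurable.comp measurable_from_top hdm
      · have : (fun π : Equiv.Perm (Fin n) => if (k : ℕ) < j ∧ d (π k) = i then 1 else 0)
            = fun _ => (0 : ℕ) := by
          funext π
          simp [hk]
        rw [this]
        exact measurable_const
    have hgmeas : Measurable[sigmaUpTo d j] g := by
      have : g = (fun q : ℕ => ((K : ℝ) - q) * (m' - ((K : ℝ) - q)) / (m' * (m' - 1)) ^ 2)
          ∘ (fun π => Q j π) := by
        funext π
        simp only [hg, hRr, Function.comp_apply]
      rw [this]
      exact Measurable.comp measurable_from_top hQmeas
    exact (Measurable.stronglyMeasurable hgmeas).aestronglyMeasurable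
  -- pointwise bound on g
  have hgle : ∀ π : Equiv.Perm (Fin n), g π ≤ 1 / (4 * ((n : ℝ) - (j + 1)) ^ 2) := by
    intro π
    have hn1 : (n : ℝ) - ((j : ℝ) + 1) = m' - 1 := by rw [hm']; ring
    rw [hg]
    simp only
    rw [hn1]
    exact aux_bound m' (Rr π) hm2
  -- conclude
  have hcond : g =ᵐ[μ] μ[f | sigmaUpTo d j] :=
    ae_eq_condExp_of_forall_setIntegral_eq hm (Integrable.of_finite)
      (fun s _ _ => Integrable.integrableOn Integrable.of_finite) hg_eq hgm
  rw [hf] at hcond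
  filter_upwards [hcond] with π hπ
  rw [← hπ, hg]
  simp only
  have hn1 : (n : ℝ) - ((j : ℝ) + 1) = m' - 1 := by rw [hm']; ring
  rw [hn1]
  exact aux_bound m' (Rr π) hm2
end
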